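/- Let F : ℝ^n → ℝ^n be quadratic, H a real n×n matrix, and let x, y : ℝ → ℝ^n be differentiable curves satisfying the mutually coupled system x'(t) = F(x(t)) + (H − DF(s(t)))·r(t), y'(t) = F(y(t)) − (H − DF(s(t)))·r(t), where s(t) = (x(t)+y(t))/2 and r(t) = (x(t)−y(t))/2. Then for all t ≥ 0, x(t) − y(t) = exp(tH)·(x(0) − y(0)), where exp denotes the matrix exponential. -/

import Mathlib

open NormedSpace


/-- For quadratic `F`, the difference of the mutually coupled
solutions evolves by the matrix exponential: `x(t) - y(t) = exp(tH)·(x(0) - y(0))`. -/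
theorem quadratic_error_matrix_exponential {n : ℕ} (F : (Fin n → ℝ) → (Fin n → ℝ))
    (c : Fin n → ℝ) (L : (Fin n → ℝ) →ₗ[ℝ] (Fin n → ℝ))
    (Q : (Fin n → ℝ) →ₗ[ℝ] (Fin n → ℝ) →ₗ[ℝ] (Fin n → ℝ))
    (hQ : ∀ u v, Q u v = Q v u)
    (hF : ∀ v, F v = c + L v + Q v v)
    (H : Matrix (Fin n) (Fin n) ℝ) (x y s r : ℝ → (Fin n → ℝ))
    (hs : ∀ t, s t = (1 / 2 : ℝ) • (x t + y t))
    (hr : ∀ t, r t = (1 / 2 : ℝ) • (x t - y t))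
    (hx : ∀ t, HasDerivAt x (F (x t) + (H.mulVec (r t) - fderiv ℝ F (s t) (r t))) t)
    (hy : ∀ t, HasDerivAt y (F (y t) - (H.mulVec (r t) - fderiv ℝ F (s t) (r t))) t) :
    ∀ t : ℝ, 0 ≤ t →
      x t - y t = (NormedSpace.exp (t • H)).mulVec (x 0 - y 0) := by
  letI : SeminormedRing (Matrix (Fin n) (Fin n) ℝ) := Matrix.linftyOpSemiNormedRing
  letI : NormedRing (Matrix (Fin n) (Fin n) ℝ) := Matrix.linftyOpNormedRing
  letI : NormedAlgebra ℝ (Matrix (Fin n) (Fin n) ℝ) := Matrix.linftyOpNormedAlgebra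
  -- continuous bilinear version of Q
  let Bc : (Fin n → ℝ) →L[ℝ] (Fin n → ℝ) →L[ℝ] (Fin n → ℝ) :=
    LinearMap.toContinuousLinearMap
      ((LinearMap.toContinuousLinearMap :
          ((Fin n → ℝ) →ₗ[ℝ] (Fin n → ℝ)) ≃ₗ[ℝ] ((Fin n → ℝ) →L[ℝ] (Fin n → ℝ))).toLinearMap ∘ₗ Q)
  have hBc : ∀ u v, Bc u v = Q u v := fun u v => rfl
  let Lc : (Fin n → ℝ) →L[ℝ] (Fin n → ℝ) := LinearMap.toContinuousLinearMap L
  have hLc : ∀ v, Lc v = L v := fun v => rfl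
  -- derivative of F
  have hFd : ∀ v : Fin n → ℝ, HasFDerivAt F (Lc + (2 : ℝ) • Bc v) v := by
    intro v
    have hdiag : HasFDerivAt (fun w : Fin n → ℝ => (w, w))
        ((ContinuousLinearMap.id ℝ (Fin n → ℝ)).prod (ContinuousLinearMap.id ℝ (Fin n → ℝ))) v :=
      (hasFDerivAt_id v).prodMk (hasFDerivAt_id v)
    have hb := HasFDerivAt.comp (f := fun w : Fin n → ℝ => (w, w)) v
        (Bc.isBoundedBilinearMap.hasFDerivAt (v, v)) hdiag
    have h1 : HasFDerivAt (fun w : Fin n → ℝ => c + L w) Lc v := by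
      simpa only [hLc] using (Lc.hasFDerivAt (x := v)).const_add c
    have hc := h1.add hb
    have hc' : HasFDerivAt F (Lc + (Bc.isBoundedBilinearMap.deriv (v, v)).comp
        ((ContinuousLinearMap.id ℝ (Fin n → ℝ)).prod (ContinuousLinearMap.id ℝ (Fin n → ℝ)))) v :=
      hc.congr_of_eventuallyEq (Filter.Eventually.of_forall fun w => (hF w))
    convert hc' using 1
    ext w
    simp [Bc.isBoundedBilinearMap.deriv_apply, hBc, hQ w v, two_smul]
  have hfd : ∀ t, fderiv ℝ F (s t) (r t) = L (r t) + (2 : ℝ) • Q (s t) (r t) := by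
    intro t
    rw [(hFd (s t)).fderiv]
    simp [hBc, hLc]
  -- z := x - y has derivative H.mulVec z
  have hz : ∀ t, HasDerivAt (fun u => x u - y u) (H.mulVec (x t - y t)) t := by
    intro t
    have h := (hx t).sub (hy t)
    refine HasDerivAt.congr_deriv h ?_
    rw [hfd t, hF (x t), hF (y t), hs t, hr t]
    simp only [map_smul, map_add, map_sub, LinearMap.add_apply, LinearMap.sub_apply,
      LinearMap.smul_apply, Matrix.mulVec_smul]
    rw [hQ (y t) (x t)]
    module
  -- the conjugated function is constant
  let M : ℝ → Matrix (Fin n) (Fin n) ℝ := fun t => exp (t • (-H))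
  let P : Matrix (Fin n) (Fin n) ℝ →L[ℝ] (Fin n → ℝ) →L[ℝ] (Fin n → ℝ) :=
    LinearMap.toContinuousLinearMap
      (((LinearMap.toContinuousLinearMap :
          ((Fin n → ℝ) →ₗ[ℝ] (Fin n → ℝ)) ≃ₗ[ℝ] ((Fin n → ℝ) →L[ℝ] (Fin n → ℝ))).toLinearMap ∘ₗ
        (Matrix.toLin' : Matrix (Fin n) (Fin n) ℝ ≃ₗ[ℝ] ((Fin n → ℝ) →ₗ[ℝ] (Fin n → ℝ))).toLinearMap))
  have hP : ∀ (A : Matrix (Fin n) (Fin n) ℝ) (v : Fin n → ℝ), P A v = A.mulVec v :=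
    fun A v => rfl
  let g : ℝ → (Fin n → ℝ) := fun t => P (M t) (x t - y t)
  have hg : ∀ t, HasDerivAt g 0 t := by
    intro t
    have hM : HasDerivAt M (exp (t • (-H)) * (-H)) t := hasDerivAt_exp_smul_const (-H) t
    have hPM : HasDerivAt (fun u => P (M u)) (P (exp (t • (-H)) * (-H))) t :=
      (P.hasFDerivAt).comp_hasDerivAt t hM
    have h := hPM.clm_apply (hz t)
    refine HasDerivAt.congr_deriv h ?_
    simp only [hP, Matrix.mulVec_mulVec, M]
    rw [mul_neg, Matrix.neg_mulVec]
    abel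
  have hgc : ∀ t, g t = g 0 := by
    intro t
    apply is_const_of_fderiv_eq_zero (fun u => (hg u).differentiableAt)
    intro u
    rw [(hg u).hasFDerivAt.fderiv]
    ext w
    simp
  intro t _
  have h0 : g 0 = x 0 - y 0 := by
    simp only [g, M, hP, zero_smul, exp_zero, Matrix.one_mulVec]
  have h1 : exp (t • H) * exp (t • (-H)) = 1 := by
    rw [← Matrix.exp_add_of_commute _ _ (by rw [smul_neg]; exact (Commute.refl (t • H)).neg_right)]
    simp
  have h2 := hgc t
  rw [h0] at h2
  have h3 := congrArg (fun v => (exp (t • H)).mulVec v) h2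
  simpa only [g, M, hP, Matrix.mulVec_mulVec, h1, Matrix.one_mulVec] using h3
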